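/- For a classical-quantum channel W^E : X → density matrices, a pmf p, and a rate R, define e_ψ(R) = max_{0≤s≤1}[sR − ψ(s|W^E,p)] and e_φ(R) = max_{0≤s≤1}[(s/2)R − ((1+s)/2)φ(s/(1+s)|W^E,p)]. Then (1/2)·e_ψ(R) ≤ e_φ(R) ≤ e_ψ(R). -/

import Mathlib

open Matrix
open scoped ComplexOrder Kronecker

noncomputable def mpow {n : Type*} [Fintype n] [DecidableEq n]
    (A : Matrix n n ℂ) (s : ℝ) : Matrix n n ℂ :=
  cfc (fun x : ℝ => x ^ s) A

noncomputable def mlog {n : Type*} [Fintype n] [DecidableEq n]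
    (A : Matrix n n ℂ) : Matrix n n ℂ :=
  cfc Real.log A

/-- `ψ(s|W,p) = log ∑_x p(x) Tr[W_x^{1+s} W_p^{-s}]`. -/
noncomputable def psiF {X : Type*} [Fintype X] {d : ℕ}
    (W : X → Matrix (Fin d) (Fin d) ℂ) (p : X → ℝ) (s : ℝ) : ℝ :=
  Real.log (∑ x, p x *
    (Matrix.trace (mpow (W x) (1+s) * mpow (∑ x, (p x : ℂ) • W x) (-s))).re)

/-- `φ(s|W,p) = log Tr[(∑_x p(x) W_x^{1/(1-s)})^{1-s}]`. -/
noncomputable def phiF {X : Type*} [Fintype X] {d : ℕ}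
    (W : X → Matrix (Fin d) (Fin d) ℂ) (p : X → ℝ) (s : ℝ) : ℝ :=
  Real.log ((Matrix.trace (mpow (∑ x, (p x : ℂ) • mpow (W x) (1/(1-s))) (1-s))).re)

set_option linter.unusedSectionVars false
set_option maxHeartbeats 1000000

namespace ExpAux

variable {n : Type*} [Fintype n] [DecidableEq n]

lemma contOn_spectrum (f : ℝ → ℝ) (A : Matrix n n ℂ) : ContinuousOn f (spectrum ℝ A) := by
  rw [continuousOn_iff_continuous_restrict]
  exact continuous_of_discreteTopology


/-- Hölder-type inequality `∑ u^θ v^(1-θ) ≤ (∑u)^θ (∑v)^(1-θ)`. -/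
lemma sum_rpow_mul_rpow_le {ι : Type*} (s : Finset ι) (θ : ℝ) (hθ0 : 0 ≤ θ) (hθ1 : θ ≤ 1)
    (u v : ι → ℝ) (hu : ∀ i ∈ s, 0 ≤ u i) (hv : ∀ i ∈ s, 0 ≤ v i) :
    ∑ i ∈ s, (u i) ^ θ * (v i) ^ (1 - θ) ≤ (∑ i ∈ s, u i) ^ θ * (∑ i ∈ s, v i) ^ (1 - θ) := by
  rcases eq_or_lt_of_le hθ0 with h0 | h0
  · simp [← h0]
  rcases eq_or_lt_of_le hθ1 with h1 | h1
  · simp [h1]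
  have hS : 0 ≤ ∑ i ∈ s, u i := Finset.sum_nonneg hu
  have hT : 0 ≤ ∑ i ∈ s, v i := Finset.sum_nonneg hv
  rcases eq_or_lt_of_le hS with hS0 | hS0
  · have : ∀ i ∈ s, u i = 0 := by
      intro i hi
      exact le_antisymm (by
        have := (Finset.sum_eq_zero_iff_of_nonneg hu).1 hS0.symm
        exact le_of_eq (this i hi)) (hu i hi)
    calc ∑ i ∈ s, (u i) ^ θ * (v i) ^ (1 - θ)
        = 0 := by
          apply Finset.sum_eq_zero
          intro i hi
          rw [this i hi, Real.zero_rpow (ne_of_gt h0), zero_mul]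
      _ ≤ _ := by positivity
  rcases eq_or_lt_of_le hT with hT0 | hT0
  · have : ∀ i ∈ s, v i = 0 := by
      intro i hi
      have := (Finset.sum_eq_zero_iff_of_nonneg hv).1 hT0.symm
      exact this i hi
    calc ∑ i ∈ s, (u i) ^ θ * (v i) ^ (1 - θ)
        = 0 := by
          apply Finset.sum_eq_zero
          intro i hi
          rw [this i hi, Real.zero_rpow (by linarith), mul_zero]
      _ ≤ _ := by positivity
  set S := ∑ i ∈ s, u i
  set T := ∑ i ∈ s, v i
  have key : ∀ i ∈ s, (u i) ^ θ * (v i) ^ (1 - θ)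
      ≤ S ^ θ * T ^ (1 - θ) * (θ * (u i / S) + (1 - θ) * (v i / T)) := by
    intro i hi
    have h := Real.geom_mean_le_arith_mean2_weighted (w₁ := θ) (w₂ := 1 - θ)
      (p₁ := u i / S) (p₂ := v i / T) (le_of_lt h0) (by linarith)
      (div_nonneg (hu i hi) hS) (div_nonneg (hv i hi) hT) (by ring)
    have hrw : (u i / S) ^ θ * (v i / T) ^ (1 - θ)
        = (u i) ^ θ * (v i) ^ (1 - θ) / (S ^ θ * T ^ (1 - θ)) := by
      rw [Real.div_rpow (hu i hi) hS, Real.div_rpow (hv i hi) hT]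
      ring
    rw [hrw] at h
    have hpos : 0 < S ^ θ * T ^ (1 - θ) := by positivity
    calc (u i) ^ θ * (v i) ^ (1 - θ)
        = (u i) ^ θ * (v i) ^ (1 - θ) / (S ^ θ * T ^ (1 - θ)) * (S ^ θ * T ^ (1 - θ)) := by
          field_simp
      _ ≤ (θ * (u i / S) + (1 - θ) * (v i / T)) * (S ^ θ * T ^ (1 - θ)) := by
          apply mul_le_mul_of_nonneg_right h (le_of_lt hpos)
      _ = S ^ θ * T ^ (1 - θ) * (θ * (u i / S) + (1 - θ) * (v i / T)) := by ring
  calc ∑ i ∈ s, (u i) ^ θ * (v i) ^ (1 - θ)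
      ≤ ∑ i ∈ s, S ^ θ * T ^ (1 - θ) * (θ * (u i / S) + (1 - θ) * (v i / T)) :=
        Finset.sum_le_sum key
    _ = S ^ θ * T ^ (1 - θ) * (θ * (S / S) + (1 - θ) * (T / T)) := by
        rw [← Finset.mul_sum]
        congr 1
        rw [Finset.sum_add_distrib, ← Finset.mul_sum, ← Finset.mul_sum, ← Finset.sum_div,
          ← Finset.sum_div]
    _ = S ^ θ * T ^ (1 - θ) := by
        rw [div_self (ne_of_gt hS0), div_self (ne_of_gt hT0)]
        ring

/-- Cauchy-Schwarz for sums of nonnegative reals. -/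
lemma sum_mul_le_sqrt_mul_sqrt {ι : Type*} (s : Finset ι) (x y : ι → ℝ)
    (hx : ∀ i ∈ s, 0 ≤ x i) (hy : ∀ i ∈ s, 0 ≤ y i) :
    ∑ i ∈ s, x i * y i ≤ Real.sqrt (∑ i ∈ s, (x i)^2) * Real.sqrt (∑ i ∈ s, (y i)^2) := by
  have h := sum_rpow_mul_rpow_le s (1/2) (by norm_num) (by norm_num)
    (fun i => (x i)^2) (fun i => (y i)^2) (fun i _ => sq_nonneg _) (fun i _ => sq_nonneg _)
  have hrw : ∀ (z : ι → ℝ), (∀ i ∈ s, 0 ≤ z i) → ∀ i ∈ s, ((z i)^2) ^ (1/2 : ℝ) = z i := by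
    intro z hz i hi
    rw [← Real.rpow_natCast (z i) 2, ← Real.rpow_mul (hz i hi)]
    norm_num
  rw [Real.sqrt_eq_rpow, Real.sqrt_eq_rpow]
  have h1 : (1 : ℝ) - 1/2 = 1/2 := by norm_num
  calc ∑ i ∈ s, x i * y i
      = ∑ i ∈ s, ((x i)^2) ^ (1/2 : ℝ) * ((y i)^2) ^ (1 - 1/2 : ℝ) := by
        apply Finset.sum_congr rfl
        intro i hi
        rw [h1, hrw x hx i hi, hrw y hy i hi]
    _ ≤ (∑ i ∈ s, (x i)^2) ^ (1/2 : ℝ) * (∑ i ∈ s, (y i)^2) ^ (1 - 1/2 : ℝ) := h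
    _ = _ := by rw [h1]



variable {n : Type*} [Fintype n] [DecidableEq n]

/-- trace of `cfc f A` for hermitian `A`. -/
lemma trace_cfc_eq {A : Matrix n n ℂ} (hA : A.IsHermitian) (f : ℝ → ℝ) :
    trace (cfc f A) = ((∑ i, f (hA.eigenvalues i) : ℝ) : ℂ) := by
  rw [hA.cfc_eq f]
  unfold Matrix.IsHermitian.cfc
  simp only [Unitary.conjStarAlgAut_apply, Unitary.coe_star]
  rw [trace_mul_cycle]
  rw [show star (hA.eigenvectorUnitary : Matrix n n ℂ) * (hA.eigenvectorUnitary : Matrix n n ℂ)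
      = 1 from Unitary.coe_star_mul_self _, one_mul, trace_diagonal]
  push_cast
  rfl

/-- Kernel representation of `Tr[cfc f A * cfc g B]`. -/
lemma kernel_exists {A B : Matrix n n ℂ} (hA : A.IsHermitian) (hB : B.IsHermitian) :
    ∃ m : n → n → ℝ, (∀ i j, 0 ≤ m i j) ∧ (∀ i, ∑ j, m i j = 1) ∧ (∀ j, ∑ i, m i j = 1) ∧
      ∀ f g : ℝ → ℝ, trace (cfc f A * cfc g B) =
        ((∑ i, ∑ j, f (hA.eigenvalues i) * g (hB.eigenvalues j) * m i j : ℝ) : ℂ) := by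
  set U : Matrix n n ℂ := (hA.eigenvectorUnitary : Matrix n n ℂ) with hU
  set V : Matrix n n ℂ := (hB.eigenvectorUnitary : Matrix n n ℂ) with hV
  have hU1 : U * star U = 1 := Unitary.coe_mul_star_self _
  have hU2 : star U * U = 1 := Unitary.coe_star_mul_self _
  have hV1 : V * star V = 1 := Unitary.coe_mul_star_self _
  have hV2 : star V * V = 1 := Unitary.coe_star_mul_self _
  set M : Matrix n n ℂ := star U * V with hM
  have hMs : star M = star V * U := by rw [hM, StarMul.star_mul, star_star]
  have hMM : M * star M = 1 := by
    rw [hMs, hM]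
    calc star U * V * (star V * U) = star U * (V * star V) * U := by
          simp only [mul_assoc]
      _ = 1 := by rw [hV1, mul_one, hU2]
  have hMM' : star M * M = 1 := by
    rw [hMs, hM]
    calc star V * U * (star U * V) = star V * (U * star U) * V := by
          simp only [mul_assoc]
      _ = 1 := by rw [hU1, mul_one, hV2]
  refine ⟨fun i j => Complex.normSq (M i j), fun i j => Complex.normSq_nonneg _, ?_, ?_, ?_⟩
  · intro i
    have h1 : (M * star M) i i = 1 := by rw [hMM, Matrix.one_apply_eq]
    rw [Matrix.mul_apply] at h1
    have h2 : ∑ j, M i j * star M j i = ((∑ j, Complex.normSq (M i j) : ℝ) : ℂ) := by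
      push_cast
      apply Finset.sum_congr rfl
      intro j _
      rw [Matrix.star_apply, Complex.star_def, Complex.mul_conj]
    rw [h2] at h1
    exact_mod_cast h1
  · intro j
    have h1 : (star M * M) j j = 1 := by rw [hMM', Matrix.one_apply_eq]
    rw [Matrix.mul_apply] at h1
    have h2 : ∑ i, star M j i * M i j = ((∑ i, Complex.normSq (M i j) : ℝ) : ℂ) := by
      push_cast
      apply Finset.sum_congr rfl
      intro i _
      rw [Matrix.star_apply, Complex.star_def, mul_comm, Complex.mul_conj]
    rw [h2] at h1
    exact_mod_cast h1
  · intro f g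
    rw [hA.cfc_eq f, hB.cfc_eq g]
    unfold Matrix.IsHermitian.cfc
    simp only [Unitary.conjStarAlgAut_apply, Unitary.coe_star]
    rw [← hU, ← hV]
    set δ : n → ℂ := RCLike.ofReal ∘ f ∘ hA.eigenvalues with hδ
    set ε : n → ℂ := RCLike.ofReal ∘ g ∘ hB.eigenvalues with hε
    have key : U * diagonal δ * star U * (V * diagonal ε * star V)
        = U * (diagonal δ * M * diagonal ε * star M) * star U := by
      rw [hMs, hM]
      calc U * diagonal δ * star U * (V * diagonal ε * star V)
          = U * diagonal δ * star U * (V * diagonal ε * star V * (U * star U)) := by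
            rw [hU1, mul_one]
        _ = U * (diagonal δ * (star U * V) * diagonal ε * (star V * U)) * star U := by
            simp only [mul_assoc]
    rw [key, trace_mul_cycle, ← mul_assoc, hU2, one_mul]
    have expand : trace (diagonal δ * M * diagonal ε * star M)
        = ∑ i, ∑ j, δ i * M i j * ε j * star (M i j) := by
      rw [Matrix.trace]
      apply Finset.sum_congr rfl
      intro i _
      rw [Matrix.diag_apply, Matrix.mul_apply]
      apply Finset.sum_congr rfl
      intro j _
      rw [Matrix.star_apply]
      congr 1
      rw [Matrix.mul_diagonal, Matrix.diagonal_mul]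
    rw [expand]
    push_cast
    apply Finset.sum_congr rfl
    intro i _
    apply Finset.sum_congr rfl
    intro j _
    have : M i j * star (M i j) = ((Complex.normSq (M i j) : ℝ) : ℂ) := by
      rw [Complex.star_def, Complex.mul_conj]
    calc δ i * M i j * ε j * star (M i j) = δ i * ε j * (M i j * star (M i j)) := by ring
      _ = _ := by
          rw [this, hδ, hε]
          simp only [Function.comp_apply]
          rw [show (RCLike.ofReal : ℝ → ℂ) = Complex.ofReal from rfl]
          try ring


variable {n : Type*} [Fintype n] [DecidableEq n]

lemma spec_nonneg {A : Matrix n n ℂ} (hA : A.PosSemidef) :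
    ∀ x ∈ spectrum ℝ A, 0 ≤ x := by
  intro x hx
  rw [hA.1.spectrum_real_eq_range_eigenvalues] at hx
  obtain ⟨i, rfl⟩ := hx
  exact hA.eigenvalues_nonneg i

lemma spec_pos {A : Matrix n n ℂ} (hA : A.PosDef) :
    ∀ x ∈ spectrum ℝ A, 0 < x := by
  intro x hx
  rw [hA.1.spectrum_real_eq_range_eigenvalues] at hx
  obtain ⟨i, rfl⟩ := hx
  exact hA.eigenvalues_pos i

lemma mpow_mul_mpow_psd {A : Matrix n n ℂ} (hA : A.PosSemidef) {a b : ℝ}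
    (ha : 0 < a) (hb : 0 < b) : mpow A a * mpow A b = mpow A (a + b) := by
  unfold mpow
  rw [← cfc_mul _ _ A (contOn_spectrum _ A) (contOn_spectrum _ A)]
  apply cfc_congr
  intro x hx
  rcases eq_or_lt_of_le (spec_nonneg hA x hx) with h0 | h0
  · simp only [← h0]
    rw [Real.zero_rpow (ne_of_gt ha), zero_mul]
    exact (Real.zero_rpow (by positivity)).symm
  · exact (Real.rpow_add h0 a b).symm

lemma mpow_mul_mpow_pd {A : Matrix n n ℂ} (hA : A.PosDef) (a b : ℝ) :
    mpow A a * mpow A b = mpow A (a + b) := by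
  unfold mpow
  rw [← cfc_mul _ _ A (contOn_spectrum _ A) (contOn_spectrum _ A)]
  apply cfc_congr
  intro x hx
  exact (Real.rpow_add (spec_pos hA x hx) a b).symm

lemma mpow_zero {A : Matrix n n ℂ} (hA : A.IsHermitian) : mpow A 0 = 1 := by
  unfold mpow
  rw [show (fun x : ℝ => x ^ (0:ℝ)) = (fun _ : ℝ => (1:ℝ)) from funext fun x => Real.rpow_zero x]
  exact cfc_const_one ℝ A hA.isSelfAdjoint

lemma mpow_one' {A : Matrix n n ℂ} (hA : A.IsHermitian) : mpow A 1 = A := by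
  unfold mpow
  rw [show (fun x : ℝ => x ^ (1:ℝ)) = (fun x : ℝ => x) from funext fun x => Real.rpow_one x]
  exact cfc_id' ℝ A hA.isSelfAdjoint

lemma mpow_isHermitian (A : Matrix n n ℂ) (r : ℝ) : (mpow A r).IsHermitian :=
  (cfc_predicate _ A : IsSelfAdjoint _)

/-- quadratic form of `cfc f A`. -/
lemma dot_cfc_eq {A : Matrix n n ℂ} (hA : A.IsHermitian) (f : ℝ → ℝ) (v : n → ℂ) :
    star v ⬝ᵥ (cfc f A *ᵥ v) = ((∑ i, f (hA.eigenvalues i) *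
      Complex.normSq ((star (hA.eigenvectorUnitary : Matrix n n ℂ) *ᵥ v) i) : ℝ) : ℂ) := by
  rw [hA.cfc_eq f]
  unfold Matrix.IsHermitian.cfc
  simp only [Unitary.conjStarAlgAut_apply, Unitary.coe_star]
  set U : Matrix n n ℂ := (hA.eigenvectorUnitary : Matrix n n ℂ) with hU
  set w : n → ℂ := star U *ᵥ v with hw
  set δ : n → ℂ := RCLike.ofReal ∘ f ∘ hA.eigenvalues with hδ
  have h1 : (U * diagonal δ * star U) *ᵥ v = U *ᵥ (diagonal δ *ᵥ w) := by
    rw [hw, ← mulVec_mulVec, ← mulVec_mulVec]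
  rw [h1]
  have h2 : star v ⬝ᵥ (U *ᵥ (diagonal δ *ᵥ w)) = star w ⬝ᵥ (diagonal δ *ᵥ w) := by
    rw [dotProduct_mulVec]
    congr 1
    rw [hw, star_mulVec, Matrix.star_eq_conjTranspose, conjTranspose_conjTranspose]
  rw [h2, dotProduct]
  push_cast
  apply Finset.sum_congr rfl
  intro i _
  rw [mulVec_diagonal]
  simp only [Pi.star_apply, hδ, Function.comp_apply]
  rw [show (RCLike.ofReal : ℝ → ℂ) = Complex.ofReal from rfl]
  rw [show star (w i) * (↑(f (hA.eigenvalues i)) * w i)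
      = ↑(f (hA.eigenvalues i)) * (w i * star (w i)) from by ring]
  rw [Complex.star_def, Complex.mul_conj]

lemma trace_conjTranspose_mul_self (M : Matrix n n ℂ) :
    trace (Mᴴ * M) = ((∑ j, ∑ i, Complex.normSq (M i j) : ℝ) : ℂ) := by
  rw [Matrix.trace]
  push_cast
  apply Finset.sum_congr rfl
  intro j _
  rw [Matrix.diag_apply, Matrix.mul_apply]
  apply Finset.sum_congr rfl
  intro i _
  rw [Matrix.conjTranspose_apply, Complex.star_def, mul_comm, Complex.mul_conj]

/-- Cauchy-Schwarz for the Frobenius inner product. -/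
lemma trace_cs (M N : Matrix n n ℂ) :
    ‖trace (Mᴴ * N)‖ ≤
      Real.sqrt ((trace (Mᴴ * M)).re) * Real.sqrt ((trace (Nᴴ * N)).re) := by
  have habs : ‖trace (Mᴴ * N)‖ ≤ ∑ j, ∑ i, ‖M i j‖ * ‖N i j‖ := by
    rw [Matrix.trace]
    refine le_trans (norm_sum_le _ _) ?_
    apply Finset.sum_le_sum
    intro j _
    rw [Matrix.diag_apply, Matrix.mul_apply]
    refine le_trans (norm_sum_le _ _) ?_
    apply Finset.sum_le_sum
    intro i _
    rw [Matrix.conjTranspose_apply, norm_mul, Complex.star_def,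
      Complex.norm_conj]
  refine le_trans habs ?_
  have e1 : ∀ P : Matrix n n ℂ, (trace (Pᴴ * P)).re = ∑ j, ∑ i, ‖P i j‖^2 := by
    intro P
    rw [trace_conjTranspose_mul_self, Complex.ofReal_re]
    apply Finset.sum_congr rfl; intro j _
    apply Finset.sum_congr rfl; intro i _
    rw [Complex.sq_norm]
  calc ∑ j, ∑ i, ‖M i j‖ * ‖N i j‖
      = ∑ p ∈ Finset.univ ×ˢ Finset.univ,
          ‖M p.2 p.1‖ * ‖N p.2 p.1‖ := by rw [Finset.sum_product]
    _ ≤ Real.sqrt (∑ p ∈ Finset.univ ×ˢ Finset.univ, ‖M p.2 p.1‖^2) *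
        Real.sqrt (∑ p ∈ Finset.univ ×ˢ Finset.univ, ‖N p.2 p.1‖^2) :=
          sum_mul_le_sqrt_mul_sqrt _ _ _ (fun p _ => norm_nonneg _)
            (fun p _ => norm_nonneg _)
    _ = _ := by rw [Finset.sum_product, Finset.sum_product, ← e1 M, ← e1 N]

lemma dotProduct_sum' {X : Type*} [Fintype X] (v : n → ℂ) (w : X → n → ℂ) :
    dotProduct v (∑ x, w x) = ∑ x, dotProduct v (w x) := by
  simp only [dotProduct, Finset.sum_apply, Finset.mul_sum]
  rw [Finset.sum_comm]

lemma exists_pos_of_sum_pos {ι : Type*} [Fintype ι] (f : ι → ℝ) (h : 0 < ∑ i, f i) :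
    ∃ i, 0 < f i := by
  by_contra h'
  push_neg at h'
  have h2 := Finset.sum_nonpos (fun i (_ : i ∈ Finset.univ) => h' i)
  linarith

lemma sum_mulVec' {X : Type*} [Fintype X] (M : X → Matrix n n ℂ) (v : n → ℂ) :
    (∑ x, M x) *ᵥ v = ∑ x, (M x) *ᵥ v := by
  ext i
  simp only [Matrix.mulVec, dotProduct, Finset.sum_apply, Matrix.sum_apply,
    Finset.sum_mul]
  rw [Finset.sum_comm]

lemma trace_sum_smul_mul {X : Type*} [Fintype X] (p : X → ℝ) (M : X → Matrix n n ℂ)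
    (B : Matrix n n ℂ) :
    ∑ x, p x * (trace (M x * B)).re = (trace ((∑ x, (p x : ℂ) • M x) * B)).re := by
  rw [Finset.sum_mul]
  have : ∀ x, ((p x : ℂ) • M x) * B = (p x : ℂ) • (M x * B) := fun x => smul_mul_assoc _ _ _
  simp only [this]
  rw [trace_sum]
  rw [Complex.re_sum]
  apply Finset.sum_congr rfl
  intro x _
  rw [trace_smul, smul_eq_mul, Complex.mul_re, Complex.ofReal_re, Complex.ofReal_im,
    zero_mul, sub_zero]

section Main

variable {X : Type*} [Fintype X] {d : ℕ}

lemma main_core (W : X → Matrix (Fin d) (Fin d) ℂ) (p : X → ℝ)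
    (hW : ∀ x, (W x).PosSemidef) (hWtr : ∀ x, Matrix.trace (W x) = 1)
    (hp : ∀ x, 0 ≤ p x) (hp1 : ∑ x, p x = 1)
    (hWp : (∑ x, (p x : ℂ) • W x).PosDef) :
    ∃ C : ℝ, (∀ s ∈ Set.Icc (0:ℝ) 1, C ≤ psiF W p s) ∧
      (∀ s ∈ Set.Icc (0:ℝ) 1, (1+s) * phiF W p (s/(1+s)) ≤ psiF W p s) ∧
      (∀ s ∈ Set.Icc (0:ℝ) 1, psiF W p (s/2) ≤ (1+s)/2 * phiF W p (s/(1+s))) := by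
  classical
  obtain ⟨x₀, hx₀⟩ : ∃ x, 0 < p x := by
    by_contra h
    push_neg at h
    have hz : ∀ x ∈ Finset.univ, p x = 0 := fun x _ => le_antisymm (h x) (hp x)
    rw [Finset.sum_eq_zero hz] at hp1
    norm_num at hp1
  have hd : 0 < d := by
    rcases Nat.eq_zero_or_pos d with h0 | h
    · exfalso
      have htr := hWtr x₀
      subst h0
      rw [Matrix.trace] at htr
      simp at htr
    · exact h
  haveI hFinNe : Nonempty (Fin d) := Fin.pos_iff_nonempty.mp hd
  set Wp : Matrix (Fin d) (Fin d) ℂ := ∑ x, (p x : ℂ) • W x with hWpdef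
  have hWpH : Wp.IsHermitian := hWp.1
  have hb : ∀ j, 0 < hWpH.eigenvalues j := fun j => hWp.eigenvalues_pos j
  have htrWp : trace Wp = 1 := by
    rw [hWpdef, trace_sum]
    have : ∀ x ∈ Finset.univ, trace ((p x : ℂ) • W x) = (p x : ℂ) := by
      intro x _
      rw [trace_smul, hWtr x, smul_eq_mul, mul_one]
    rw [Finset.sum_congr rfl this, ← Complex.ofReal_sum, hp1, Complex.ofReal_one]
  have hbsum : ∑ j, hWpH.eigenvalues j = 1 := by
    have h1 := trace_cfc_eq hWpH (fun y => y)
    rw [cfc_id' ℝ Wp hWpH.isSelfAdjoint, htrWp] at h1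
    exact_mod_cast h1.symm
  have ha : ∀ x i, 0 ≤ (hW x).1.eigenvalues i := fun x i => (hW x).eigenvalues_nonneg i
  have hasum : ∀ x, ∑ i, (hW x).1.eigenvalues i = 1 := by
    intro x
    have h1 := trace_cfc_eq (hW x).1 (fun y => y)
    rw [cfc_id' ℝ (W x) (hW x).1.isSelfAdjoint, hWtr x] at h1
    exact_mod_cast h1.symm
  obtain ⟨m, hm0, hmrow, hmcol, hmtr⟩ :
      ∃ m : X → Fin d → Fin d → ℝ, (∀ x i j, 0 ≤ m x i j) ∧ (∀ x i, ∑ j, m x i j = 1) ∧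
        (∀ x j, ∑ i, m x i j = 1) ∧ ∀ x (f g : ℝ → ℝ),
          trace (cfc f (W x) * cfc g Wp) =
            ((∑ i, ∑ j, f ((hW x).1.eigenvalues i) * g (hWpH.eigenvalues j) * m x i j : ℝ) : ℂ) := by
    have h := fun x => kernel_exists (hW x).1 hWpH
    choose m h0 h1 h2 h3 using h
    exact ⟨m, h0, h1, h2, h3⟩
  set G : ℝ → ℝ := fun σ => ∑ x, p x *
    (trace (mpow (W x) (1+σ) * mpow Wp (-σ))).re with hGdef
  have hpsi : ∀ σ, psiF W p σ = Real.log (G σ) := by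
    intro σ
    rw [hGdef]
    rfl
  have hGm : ∀ σ, G σ = ∑ x, p x *
      (∑ i, ∑ j, ((hW x).1.eigenvalues i) ^ (1+σ) * (hWpH.eigenvalues j) ^ (-σ) * m x i j) := by
    intro σ
    rw [hGdef]
    apply Finset.sum_congr rfl
    intro x _
    congr 1
    rw [show mpow (W x) (1+σ) = cfc (fun y : ℝ => y ^ (1+σ)) (W x) from rfl,
      show mpow Wp (-σ) = cfc (fun y : ℝ => y ^ (-σ)) Wp from rfl,
      hmtr x (fun y => y ^ (1+σ)) (fun y => y ^ (-σ)), Complex.ofReal_re]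
  -- uniform lower bound for G
  set c₀ : ℝ := ∑ x, p x * (∑ i, ∑ j,
    (min (((hW x).1.eigenvalues i) ^ (1:ℝ)) (((hW x).1.eigenvalues i) ^ (2:ℝ)) *
      min 1 ((hWpH.eigenvalues j) ^ (-1:ℝ))) * m x i j) with hc₀def
  have pf1 : ∀ (A : ℝ), 0 ≤ A → ∀ σ : ℝ, 0 ≤ σ → σ ≤ 1 →
      min (A ^ (1:ℝ)) (A ^ (2:ℝ)) ≤ A ^ (1+σ) := by
    intro A hA σ hσ0 hσ1
    rcases hA.eq_or_lt with h0 | h0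
    · rw [← h0, Real.zero_rpow (by norm_num), Real.zero_rpow (by norm_num),
        Real.zero_rpow (by positivity)]
      norm_num
    · rcases le_total A 1 with h1 | h1
      · refine le_trans (min_le_right _ _) ?_
        exact Real.rpow_le_rpow_of_exponent_ge h0 h1 (by linarith)
      · refine le_trans (min_le_left _ _) ?_
        exact Real.rpow_le_rpow_of_exponent_le h1 (by linarith)
  have pf2 : ∀ (B : ℝ), 0 < B → ∀ σ : ℝ, 0 ≤ σ → σ ≤ 1 →
      min 1 (B ^ (-1:ℝ)) ≤ B ^ (-σ) := by
    intro B hB σ hσ0 hσ1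
    rcases le_total B 1 with h1 | h1
    · refine le_trans (min_le_left _ _) ?_
      have := Real.rpow_le_rpow_of_exponent_ge hB h1 (by linarith : -σ ≤ 0)
      rwa [Real.rpow_zero] at this
    · refine le_trans (min_le_right _ _) ?_
      exact Real.rpow_le_rpow_of_exponent_le h1 (by linarith)
  have hGlb : ∀ σ, 0 ≤ σ → σ ≤ 1 → c₀ ≤ G σ := by
    intro σ hσ0 hσ1
    rw [hGm σ, hc₀def]
    apply Finset.sum_le_sum
    intro x _
    apply mul_le_mul_of_nonneg_left _ (hp x)
    apply Finset.sum_le_sum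
    intro i _
    apply Finset.sum_le_sum
    intro j _
    apply mul_le_mul_of_nonneg_right _ (hm0 x i j)
    apply mul_le_mul (pf1 _ (ha x i) σ hσ0 hσ1) (pf2 _ (hb j) σ hσ0 hσ1)
    · apply le_min
      · norm_num
      · exact Real.rpow_nonneg (le_of_lt (hb j)) _
    · apply Real.rpow_nonneg (ha x i)
  have hc₀pos : 0 < c₀ := by
    rw [hc₀def]
    apply Finset.sum_pos'
    · intro x _
      apply mul_nonneg (hp x)
      apply Finset.sum_nonneg
      intro i _
      apply Finset.sum_nonneg
      intro j _
      apply mul_nonneg _ (hm0 x i j)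
      apply mul_nonneg
      · apply le_min
        · apply Real.rpow_nonneg (ha x i)
        · apply Real.rpow_nonneg (ha x i)
      · apply le_min
        · norm_num
        · apply Real.rpow_nonneg (le_of_lt (hb j))
    · refine ⟨x₀, Finset.mem_univ _, ?_⟩
      apply mul_pos hx₀
      obtain ⟨i₀, hi₀⟩ : ∃ i, 0 < (hW x₀).1.eigenvalues i := by
        by_contra hcon
        push_neg at hcon
        have : ∑ i, (hW x₀).1.eigenvalues i = 0 :=
          le_antisymm (Finset.sum_nonpos fun i _ => hcon i)
            (Finset.sum_nonneg fun i _ => ha x₀ i)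
        rw [hasum x₀] at this
        norm_num at this
      obtain ⟨j₀, hj₀⟩ : ∃ j, 0 < m x₀ i₀ j := by
        by_contra hcon
        push_neg at hcon
        have : ∑ j, m x₀ i₀ j = 0 :=
          le_antisymm (Finset.sum_nonpos fun j _ => hcon j)
            (Finset.sum_nonneg fun j _ => hm0 x₀ i₀ j)
        rw [hmrow x₀ i₀] at this
        norm_num at this
      apply Finset.sum_pos'
      · intro i _
        apply Finset.sum_nonneg
        intro j _
        apply mul_nonneg _ (hm0 x₀ i j)
        apply mul_nonneg
        · exact le_min (Real.rpow_nonneg (ha x₀ i) _) (Real.rpow_nonneg (ha x₀ i) _)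
        · exact le_min (by norm_num) (Real.rpow_nonneg (le_of_lt (hb j)) _)
      · refine ⟨i₀, Finset.mem_univ _, ?_⟩
        apply Finset.sum_pos'
        · intro j _
          apply mul_nonneg _ (hm0 x₀ i₀ j)
          apply mul_nonneg
          · exact le_min (Real.rpow_nonneg (ha x₀ i₀) _) (Real.rpow_nonneg (ha x₀ i₀) _)
          · exact le_min (by norm_num) (Real.rpow_nonneg (le_of_lt (hb j)) _)
        · refine ⟨j₀, Finset.mem_univ _, ?_⟩
          apply mul_pos _ hj₀
          apply mul_pos
          · apply lt_min
            · exact Real.rpow_pos_of_pos hi₀ _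
            · exact Real.rpow_pos_of_pos hi₀ _
          · apply lt_min
            · norm_num
            · exact Real.rpow_pos_of_pos (hb j₀) _
  have hGpos : ∀ σ, 0 ≤ σ → σ ≤ 1 → 0 < G σ := fun σ h0 h1 => lt_of_lt_of_le hc₀pos (hGlb σ h0 h1)
  -- value at 0
  have hG0 : G 0 = 1 := by
    rw [hGm 0]
    have : ∀ x ∈ Finset.univ, p x * (∑ i, ∑ j, ((hW x).1.eigenvalues i) ^ (1+(0:ℝ)) *
        (hWpH.eigenvalues j) ^ (-(0:ℝ)) * m x i j) = p x := by
      intro x _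
      have hinner : (∑ i, ∑ j, ((hW x).1.eigenvalues i) ^ (1+(0:ℝ)) *
          (hWpH.eigenvalues j) ^ (-(0:ℝ)) * m x i j) = 1 := by
        rw [show (1+(0:ℝ)) = 1 by norm_num, show (-(0:ℝ)) = 0 by norm_num]
        have : ∀ i ∈ Finset.univ, ∑ j, ((hW x).1.eigenvalues i) ^ (1:ℝ) *
            (hWpH.eigenvalues j) ^ (0:ℝ) * m x i j = (hW x).1.eigenvalues i := by
          intro i _
          have : ∀ j ∈ Finset.univ, ((hW x).1.eigenvalues i) ^ (1:ℝ) *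
              (hWpH.eigenvalues j) ^ (0:ℝ) * m x i j = (hW x).1.eigenvalues i * m x i j := by
            intro j _
            rw [Real.rpow_one, Real.rpow_zero, mul_one]
          rw [Finset.sum_congr rfl this, ← Finset.mul_sum, hmrow x i, mul_one]
        rw [Finset.sum_congr rfl this, hasum x]
      rw [hinner, mul_one]
    rw [Finset.sum_congr rfl this, hp1]
  have hpsi0 : psiF W p 0 = 0 := by
    rw [hpsi 0, hG0, Real.log_one]
  have hphi0 : phiF W p 0 = 0 := by
    unfold phiF
    rw [show (1:ℝ)/(1-0) = 1 by norm_num, show (1:ℝ)-0 = 1 by norm_num]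
    have h1 : ∀ x ∈ Finset.univ, (p x : ℂ) • mpow (W x) 1 = (p x : ℂ) • W x := by
      intro x _
      rw [mpow_one' (hW x).1]
    rw [Finset.sum_congr rfl h1, ← hWpdef, mpow_one' hWpH, htrWp]
    simp

  -- key inequalities for s > 0
  have hkey : ∀ s : ℝ, 0 < s → s ≤ 1 →
      (1+s) * phiF W p (s/(1+s)) ≤ psiF W p s ∧
      psiF W p (s/2) ≤ (1+s)/2 * phiF W p (s/(1+s)) := by
    intro s hs0 hs1
    have hs1p : (0:ℝ) < 1 + s := by linarith
    have hs1ne : (1:ℝ) + s ≠ 0 := ne_of_gt hs1p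
    set K : Matrix (Fin d) (Fin d) ℂ := ∑ x, (p x : ℂ) • mpow (W x) (1+s) with hKdef
    have hKH : K.IsHermitian := by
      show Kᴴ = K
      rw [hKdef, conjTranspose_sum]
      apply Finset.sum_congr rfl
      intro x _
      rw [Matrix.conjTranspose_smul, Complex.star_def, Complex.conj_ofReal,
        (mpow_isHermitian (W x) (1+s)).eq]
    have hlin : ∀ (M : X → Matrix (Fin d) (Fin d) ℂ) (v : Fin d → ℂ),
        star v ⬝ᵥ ((∑ x, (p x : ℂ) • M x) *ᵥ v) = ∑ x, (p x : ℂ) * (star v ⬝ᵥ (M x *ᵥ v)) := by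
      intro M v
      rw [sum_mulVec' (fun x => (p x : ℂ) • M x) v, dotProduct_sum' (star v)]
      apply Finset.sum_congr rfl
      intro x _
      rw [Matrix.smul_mulVec, dotProduct_smul, smul_eq_mul]
    have hKpd : K.PosDef := by
      refine PosDef.of_dotProduct_mulVec_pos hKH ?_
      intro v hv
      have hq := hWp.dotProduct_mulVec_pos hv
      rw [hWpdef, hlin W v] at hq
      have hWxq : ∀ x, star v ⬝ᵥ (W x *ᵥ v) = ((∑ i, (hW x).1.eigenvalues i *
          Complex.normSq ((star ((hW x).1.eigenvectorUnitary : Matrix (Fin d) (Fin d) ℂ) *ᵥ v) i) : ℝ) : ℂ) := by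
        intro x
        have h := dot_cfc_eq (hW x).1 (fun y => y) v
        rwa [cfc_id' ℝ (W x) (hW x).1.isSelfAdjoint] at h
      rw [Finset.sum_congr rfl (fun x _ => by rw [hWxq x])] at hq
      have hq2 : (0:ℂ) < ((∑ x, p x * ∑ i, (hW x).1.eigenvalues i *
          Complex.normSq ((star ((hW x).1.eigenvectorUnitary : Matrix (Fin d) (Fin d) ℂ) *ᵥ v) i) : ℝ) : ℂ) := by
        rw [Complex.ofReal_sum]
        convert hq using 2 with x
        push_cast
        ring
      have hreal : 0 < ∑ x, p x * ∑ i, (hW x).1.eigenvalues i *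
          Complex.normSq ((star ((hW x).1.eigenvectorUnitary : Matrix (Fin d) (Fin d) ℂ) *ᵥ v) i) :=
        Complex.zero_lt_real.mp hq2
      obtain ⟨x₁, hx₁⟩ := exists_pos_of_sum_pos _ hreal
      have hpx₁ : 0 < p x₁ := by
        by_contra h
        push_neg at h
        have h0 : p x₁ = 0 := le_antisymm h (hp x₁)
        rw [h0, zero_mul] at hx₁
        norm_num at hx₁
      have hS : 0 < ∑ i, (hW x₁).1.eigenvalues i *
          Complex.normSq ((star ((hW x₁).1.eigenvectorUnitary : Matrix (Fin d) (Fin d) ℂ) *ᵥ v) i) := by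
        by_contra h
        push_neg at h
        nlinarith
      obtain ⟨i₁, hi₁⟩ := exists_pos_of_sum_pos _ hS
      have hai : 0 < (hW x₁).1.eigenvalues i₁ := by
        by_contra h
        push_neg at h
        have h0 : (hW x₁).1.eigenvalues i₁ = 0 := le_antisymm h (ha x₁ i₁)
        rw [h0, zero_mul] at hi₁
        norm_num at hi₁
      have hni : 0 < Complex.normSq ((star ((hW x₁).1.eigenvectorUnitary : Matrix (Fin d) (Fin d) ℂ) *ᵥ v) i₁) := by
        by_contra h
        push_neg at h
        have h0 : Complex.normSq ((star ((hW x₁).1.eigenvectorUnitary : Matrix (Fin d) (Fin d) ℂ) *ᵥ v) i₁) = 0 :=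
          le_antisymm h (Complex.normSq_nonneg _)
        rw [h0, mul_zero] at hi₁
        norm_num at hi₁
      -- now expand K's quadratic form
      rw [hKdef, hlin (fun x => mpow (W x) (1+s)) v]
      have hKxq : ∀ x, star v ⬝ᵥ (mpow (W x) (1+s) *ᵥ v) = ((∑ i, ((hW x).1.eigenvalues i) ^ (1+s) *
          Complex.normSq ((star ((hW x).1.eigenvectorUnitary : Matrix (Fin d) (Fin d) ℂ) *ᵥ v) i) : ℝ) : ℂ) :=
        fun x => dot_cfc_eq (hW x).1 (fun y => y ^ (1+s)) v
      rw [Finset.sum_congr rfl (fun x _ => by rw [hKxq x])]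
      have : (∑ x, (p x : ℂ) * ((∑ i, ((hW x).1.eigenvalues i) ^ (1+s) *
          Complex.normSq ((star ((hW x).1.eigenvectorUnitary : Matrix (Fin d) (Fin d) ℂ) *ᵥ v) i) : ℝ) : ℂ))
          = ((∑ x, p x * ∑ i, ((hW x).1.eigenvalues i) ^ (1+s) *
          Complex.normSq ((star ((hW x).1.eigenvectorUnitary : Matrix (Fin d) (Fin d) ℂ) *ᵥ v) i) : ℝ) : ℂ) := by
        rw [Complex.ofReal_sum]
        apply Finset.sum_congr rfl
        intro x _
        push_cast
        ring
      rw [this]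
      rw [Complex.zero_lt_real]
      apply Finset.sum_pos'
      · intro x _
        apply mul_nonneg (hp x)
        apply Finset.sum_nonneg
        intro i _
        exact mul_nonneg (Real.rpow_nonneg (ha x i) _) (Complex.normSq_nonneg _)
      · refine ⟨x₁, Finset.mem_univ _, mul_pos hpx₁ ?_⟩
        apply Finset.sum_pos'
        · intro i _
          exact mul_nonneg (Real.rpow_nonneg (ha x₁ i) _) (Complex.normSq_nonneg _)
        · exact ⟨i₁, Finset.mem_univ _, mul_pos (Real.rpow_pos_of_pos hai _) hni⟩
    have hγ : ∀ i, 0 < hKH.eigenvalues i := fun i => hKpd.eigenvalues_pos i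
    set F : ℝ := ∑ i, hKH.eigenvalues i ^ (1/(1+s)) with hFdef
    have hFpos : 0 < F :=
      Finset.sum_pos (fun i _ => Real.rpow_pos_of_pos (hγ i) _) Finset.univ_nonempty
    have hphi : phiF W p (s/(1+s)) = Real.log F := by
      unfold phiF
      have e2 : 1/(1-s/(1+s)) = 1+s := by field_simp; ring
      have e1 : 1-s/(1+s) = 1/(1+s) := by field_simp; ring
      rw [e2, e1, ← hKdef,
        show mpow K (1/(1+s)) = cfc (fun y : ℝ => y ^ (1/(1+s))) K from rfl,
        trace_cfc_eq hKH, Complex.ofReal_re, hFdef]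
    set r : ℝ := 1/(1+s) with hrdef
    have hr0 : 0 < r := by rw [hrdef]; positivity
    have hr1 : r < 1 := by rw [hrdef, div_lt_one hs1p]; linarith
    have hGs : 0 < G s := hGpos s (le_of_lt hs0) hs1
    -- kernel between K and Wp
    obtain ⟨μ, hμ0, hμrow, hμcol, hμtr⟩ := kernel_exists hKH hWpH
    have hGA : G s = ∑ i, ∑ j, hKH.eigenvalues i * hWpH.eigenvalues j ^ (-s) * μ i j := by
      simp only [hGdef]
      rw [trace_sum_smul_mul p (fun x => mpow (W x) (1+s)) (mpow Wp (-s)), ← hKdef]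
      have h := hμtr (fun y => y) (fun y => y ^ (-s))
      rw [cfc_id' ℝ K hKH.isSelfAdjoint] at h
      rw [show mpow Wp (-s) = cfc (fun y : ℝ => y ^ (-s)) Wp from rfl, h, Complex.ofReal_re]
    -- part (A): F ≤ (G s)^r
    have hptA : ∀ (q : Fin d × Fin d), hKH.eigenvalues q.1 ^ r * μ q.1 q.2
        = (μ q.1 q.2 * (hKH.eigenvalues q.1 * hWpH.eigenvalues q.2 ^ (-s))) ^ r *
          (μ q.1 q.2 * hWpH.eigenvalues q.2) ^ (1-r) := by
      rintro ⟨i, j⟩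
      simp only
      rcases (hμ0 i j).eq_or_lt with h0 | h0
      · rw [← h0, mul_zero, zero_mul, zero_mul, Real.zero_rpow (ne_of_gt hr0),
          Real.zero_rpow (by intro h; rw [sub_eq_zero] at h; exact absurd h.symm (ne_of_lt hr1)), zero_mul]
      · have hγi := hγ i
        have hbj := hb j
        rw [Real.mul_rpow (le_of_lt h0)
            (mul_nonneg (le_of_lt hγi) (Real.rpow_nonneg (le_of_lt hbj) _)),
          Real.mul_rpow (le_of_lt hγi) (Real.rpow_nonneg (le_of_lt hbj) _),
          Real.mul_rpow (le_of_lt h0) (le_of_lt hbj),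
          ← Real.rpow_mul (le_of_lt hbj)]
        have hμr : μ i j ^ r * μ i j ^ (1-r) = μ i j := by
          rw [← Real.rpow_add h0, show r + (1-r) = 1 by ring, Real.rpow_one]
        have hbr : hWpH.eigenvalues j ^ (-s * r) * hWpH.eigenvalues j ^ (1-r) = 1 := by
          rw [← Real.rpow_add hbj]
          have : -s * r + (1-r) = 0 := by
            rw [hrdef]
            field_simp
            ring
          rw [this, Real.rpow_zero]
        calc hKH.eigenvalues i ^ r * μ i j
            = (hKH.eigenvalues i ^ r) * (μ i j ^ r * μ i j ^ (1-r)) *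
              (hWpH.eigenvalues j ^ (-s * r) * hWpH.eigenvalues j ^ (1-r)) := by
              rw [hμr, hbr]; ring
          _ = _ := by ring
    have hsumu : ∑ q ∈ Finset.univ ×ˢ Finset.univ,
        (μ q.1 q.2 * (hKH.eigenvalues q.1 * hWpH.eigenvalues q.2 ^ (-s))) = G s := by
      rw [Finset.sum_product, hGA]
      apply Finset.sum_congr rfl
      intro i _
      apply Finset.sum_congr rfl
      intro j _
      ring
    have hsumv : ∑ q ∈ Finset.univ ×ˢ Finset.univ,
        (μ q.1 q.2 * hWpH.eigenvalues q.2) = 1 := by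
      rw [Finset.sum_product, Finset.sum_comm]
      have : ∀ j ∈ Finset.univ, ∑ i, μ i j * hWpH.eigenvalues j = hWpH.eigenvalues j := by
        intro j _
        rw [← Finset.sum_mul, hμcol j, one_mul]
      rw [Finset.sum_congr rfl this, hbsum]
    have hFG : F ≤ (G s) ^ r := by
      have hH := sum_rpow_mul_rpow_le (Finset.univ ×ˢ Finset.univ) r (le_of_lt hr0) (le_of_lt hr1)
        (fun q => μ q.1 q.2 * (hKH.eigenvalues q.1 * hWpH.eigenvalues q.2 ^ (-s)))
        (fun q => μ q.1 q.2 * hWpH.eigenvalues q.2)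
        (fun q _ => mul_nonneg (hμ0 q.1 q.2)
          (mul_nonneg (le_of_lt (hγ q.1)) (Real.rpow_nonneg (le_of_lt (hb q.2)) _)))
        (fun q _ => mul_nonneg (hμ0 q.1 q.2) (le_of_lt (hb q.2)))
      rw [hsumu, hsumv, Real.one_rpow, mul_one] at hH
      refine le_trans (le_of_eq ?_) hH
      rw [hFdef]
      calc ∑ i, hKH.eigenvalues i ^ r
          = ∑ i, hKH.eigenvalues i ^ r * (∑ j, μ i j) := by
            apply Finset.sum_congr rfl
            intro i _
            rw [hμrow i, mul_one]
        _ = ∑ i, ∑ j, hKH.eigenvalues i ^ r * μ i j := by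
            apply Finset.sum_congr rfl
            intro i _
            rw [Finset.mul_sum]
        _ = _ := by
            rw [Finset.sum_product]
            apply Finset.sum_congr rfl
            intro i _
            apply Finset.sum_congr rfl
            intro j _
            exact hptA (i, j)
    have hina : (1+s) * phiF W p (s/(1+s)) ≤ psiF W p s := by
      rw [hphi, hpsi s]
      have hlogF : Real.log F ≤ r * Real.log (G s) := by
        calc Real.log F ≤ Real.log ((G s) ^ r) := Real.log_le_log hFpos hFG
          _ = r * Real.log (G s) := Real.log_rpow hGs r
      have hrs : (1+s) * r = 1 := by rw [hrdef]; field_simp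
      calc (1+s) * Real.log F ≤ (1+s) * (r * Real.log (G s)) := by
            apply mul_le_mul_of_nonneg_left hlogF (by linarith)
        _ = ((1+s) * r) * Real.log (G s) := by ring
        _ = Real.log (G s) := by rw [hrs, one_mul]
    refine ⟨hina, ?_⟩
    -- part (B)
    set cc : ℝ := s/(1+s) with hcdef
    have hcc0 : 0 < cc := by rw [hcdef]; positivity
    have hrc : 1 - cc = r := by rw [hcdef, hrdef]; field_simp; ring
    have hhalf : mpow K (cc/2) * mpow K (-(cc/2)) = 1 := by
      rw [mpow_mul_mpow_pd hKpd, show cc/2 + -(cc/2) = 0 by ring, mpow_zero hKH]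
    have hTT : mpow K (cc/2) * mpow K (cc/2) = mpow K cc := by
      rw [mpow_mul_mpow_pd hKpd, show cc/2 + cc/2 = cc by ring]
    have hTT' : mpow K (-(cc/2)) * mpow K (-(cc/2)) = mpow K (-cc) := by
      rw [mpow_mul_mpow_pd hKpd, show -(cc/2) + -(cc/2) = -cc by ring]
    have hWxhalf : ∀ x, mpow (W x) (1/2) * mpow (W x) (1/2) = W x := by
      intro x
      rw [mpow_mul_mpow_psd (hW x) (by norm_num) (by norm_num),
        show (1:ℝ)/2 + 1/2 = 1 by norm_num, mpow_one' (hW x).1]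
    set M : X → Matrix (Fin d) (Fin d) ℂ :=
      fun x => mpow K (cc/2) * mpow Wp (-(s/2)) * mpow (W x) (1/2) with hMdef
    set N : X → Matrix (Fin d) (Fin d) ℂ :=
      fun x => mpow K (-(cc/2)) * mpow (W x) ((1+s)/2) with hNdef
    have hMH : ∀ x, (M x)ᴴ = mpow (W x) (1/2) * mpow Wp (-(s/2)) * mpow K (cc/2) := by
      intro x
      simp only [hMdef]
      rw [conjTranspose_mul, conjTranspose_mul, (mpow_isHermitian _ _).eq,
        (mpow_isHermitian _ _).eq, (mpow_isHermitian _ _).eq, ← mul_assoc]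
    have hNH : ∀ x, (N x)ᴴ = mpow (W x) ((1+s)/2) * mpow K (-(cc/2)) := by
      intro x
      simp only [hNdef]
      rw [conjTranspose_mul, (mpow_isHermitian _ _).eq, (mpow_isHermitian _ _).eq]
    have htrMN : ∀ x, trace ((M x)ᴴ * N x) = trace (mpow (W x) (1 + s/2) * mpow Wp (-(s/2))) := by
      intro x
      rw [hMH x]
      simp only [hNdef]
      have e : mpow (W x) (1/2) * mpow Wp (-(s/2)) * mpow K (cc/2) *
          (mpow K (-(cc/2)) * mpow (W x) ((1+s)/2))
          = mpow (W x) (1/2) * (mpow Wp (-(s/2)) *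
            ((mpow K (cc/2) * mpow K (-(cc/2))) * mpow (W x) ((1+s)/2))) := by
        simp only [mul_assoc]
      rw [e, hhalf, one_mul, ← mul_assoc, trace_mul_cycle,
        mpow_mul_mpow_psd (hW x) (by positivity) (by norm_num : (0:ℝ) < 1/2),
        show (1+s)/2 + 1/2 = 1 + s/2 by ring]
    set BB : Matrix (Fin d) (Fin d) ℂ :=
      mpow Wp (-(s/2)) * (mpow K cc * mpow Wp (-(s/2))) with hBBdef
    have hMM : ∀ x, trace ((M x)ᴴ * M x) = trace (W x * BB) := by
      intro x
      rw [hMH x]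
      simp only [hMdef]
      have e : mpow (W x) (1/2) * mpow Wp (-(s/2)) * mpow K (cc/2) *
          (mpow K (cc/2) * mpow Wp (-(s/2)) * mpow (W x) (1/2))
          = mpow (W x) (1/2) * (mpow Wp (-(s/2)) * ((mpow K (cc/2) * mpow K (cc/2)) *
            (mpow Wp (-(s/2)) * mpow (W x) (1/2)))) := by
        simp only [mul_assoc]
      rw [e, hTT, trace_mul_comm]
      have e2 : mpow Wp (-(s/2)) * (mpow K cc * (mpow Wp (-(s/2)) * mpow (W x) (1/2))) *
          mpow (W x) (1/2)
          = BB * (mpow (W x) (1/2) * mpow (W x) (1/2)) := by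
        rw [hBBdef]
        simp only [mul_assoc]
      rw [e2, hWxhalf x, trace_mul_comm]
    have hNN : ∀ x, trace ((N x)ᴴ * N x) = trace (mpow (W x) (1+s) * mpow K (-cc)) := by
      intro x
      rw [hNH x]
      simp only [hNdef]
      have e : mpow (W x) ((1+s)/2) * mpow K (-(cc/2)) *
          (mpow K (-(cc/2)) * mpow (W x) ((1+s)/2))
          = mpow (W x) ((1+s)/2) * ((mpow K (-(cc/2)) * mpow K (-(cc/2))) *
            mpow (W x) ((1+s)/2)) := by
        simp only [mul_assoc]
      rw [e, hTT', ← mul_assoc, trace_mul_cycle,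
        mpow_mul_mpow_psd (hW x) (by positivity) (by positivity),
        show (1+s)/2 + (1+s)/2 = 1+s by ring]
    set P : X → ℝ := fun x => (trace ((M x)ᴴ * M x)).re with hPdef
    set Q : X → ℝ := fun x => (trace ((N x)ᴴ * N x)).re with hQdef
    have hPnn : ∀ x, 0 ≤ P x := by
      intro x
      simp only [hPdef]
      rw [trace_conjTranspose_mul_self, Complex.ofReal_re]
      apply Finset.sum_nonneg
      intro j _
      apply Finset.sum_nonneg
      intro i _
      exact Complex.normSq_nonneg _
    have hQnn : ∀ x, 0 ≤ Q x := by
      intro x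
      simp only [hQdef]
      rw [trace_conjTranspose_mul_self, Complex.ofReal_re]
      apply Finset.sum_nonneg
      intro j _
      apply Finset.sum_nonneg
      intro i _
      exact Complex.normSq_nonneg _
    have hterm : ∀ x, (trace (mpow (W x) (1 + s/2) * mpow Wp (-(s/2)))).re
        ≤ Real.sqrt (P x) * Real.sqrt (Q x) := by
      intro x
      rw [← htrMN x]
      refine le_trans (Complex.re_le_norm _) ?_
      simp only [hPdef, hQdef]
      exact trace_cs (M x) (N x)
    have hGB : G (s/2) ≤ Real.sqrt (∑ x, p x * P x) * Real.sqrt (∑ x, p x * Q x) := by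
      have h1 : G (s/2) ≤ ∑ x, Real.sqrt (p x * P x) * Real.sqrt (p x * Q x) := by
        simp only [hGdef]
        apply Finset.sum_le_sum
        intro x _
        rw [Real.sqrt_mul (hp x), Real.sqrt_mul (hp x)]
        have hsq : Real.sqrt (p x) * Real.sqrt (p x) = p x := Real.mul_self_sqrt (hp x)
        calc p x * (trace (mpow (W x) (1 + s/2) * mpow Wp (-(s/2)))).re
            ≤ p x * (Real.sqrt (P x) * Real.sqrt (Q x)) :=
              mul_le_mul_of_nonneg_left (hterm x) (hp x)
          _ = (Real.sqrt (p x) * Real.sqrt (P x)) * (Real.sqrt (p x) * Real.sqrt (Q x)) := by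
              rw [show (Real.sqrt (p x) * Real.sqrt (P x)) * (Real.sqrt (p x) * Real.sqrt (Q x))
                = (Real.sqrt (p x) * Real.sqrt (p x)) * (Real.sqrt (P x) * Real.sqrt (Q x)) from
                by ring, hsq]
      refine le_trans h1 ?_
      have h2 := sum_mul_le_sqrt_mul_sqrt Finset.univ (fun x => Real.sqrt (p x * P x))
        (fun x => Real.sqrt (p x * Q x)) (fun x _ => Real.sqrt_nonneg _)
        (fun x _ => Real.sqrt_nonneg _)
      have e1 : ∑ x, (Real.sqrt (p x * P x))^2 = ∑ x, p x * P x := by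
        apply Finset.sum_congr rfl
        intro x _
        exact Real.sq_sqrt (mul_nonneg (hp x) (hPnn x))
      have e2 : ∑ x, (Real.sqrt (p x * Q x))^2 = ∑ x, p x * Q x := by
        apply Finset.sum_congr rfl
        intro x _
        exact Real.sq_sqrt (mul_nonneg (hp x) (hQnn x))
      rw [e1, e2] at h2
      exact h2
    obtain ⟨ν, hν0, hνrow, hνcol, hνtr⟩ := kernel_exists hWpH hKH
    have hsumQ : ∑ x, p x * Q x = F := by
      simp only [hQdef]
      have e0 : ∀ x ∈ Finset.univ, p x * (trace ((N x)ᴴ * N x)).re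
          = p x * (trace (mpow (W x) (1+s) * mpow K (-cc))).re := by
        intro x _
        rw [hNN x]
      rw [Finset.sum_congr rfl e0,
        trace_sum_smul_mul p (fun x => mpow (W x) (1+s)) (mpow K (-cc)), ← hKdef]
      have e1 : K * mpow K (-cc) = mpow K r := by
        nth_rewrite 1 [← mpow_one' hKH]
        rw [mpow_mul_mpow_pd hKpd, show (1:ℝ) + -cc = r by rw [← hrc]; ring]
      rw [e1, show mpow K r = cfc (fun y : ℝ => y ^ r) K from rfl, trace_cfc_eq hKH,
        Complex.ofReal_re, hFdef]
    have hsumP : ∑ x, p x * P x ≤ F ^ s := by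
      simp only [hPdef]
      have e0 : ∀ x ∈ Finset.univ, p x * (trace ((M x)ᴴ * M x)).re
          = p x * (trace (W x * BB)).re := by
        intro x _
        rw [hMM x]
      rw [Finset.sum_congr rfl e0, trace_sum_smul_mul p W BB, ← hWpdef]
      have e1 : Wp * BB = mpow Wp (1 + -(s/2)) * (mpow K cc * mpow Wp (-(s/2))) := by
        rw [hBBdef, ← mul_assoc]
        nth_rewrite 1 [← mpow_one' hWpH]
        rw [mpow_mul_mpow_pd hWp]
      have e2 : trace (Wp * BB) = trace (mpow Wp (1-s) * mpow K cc) := by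
        rw [e1, ← mul_assoc, trace_mul_cycle, mpow_mul_mpow_pd hWp,
          show -(s/2) + (1 + -(s/2)) = 1 - s by ring]
      rw [e2]
      have e3 : (trace (mpow Wp (1-s) * mpow K cc)).re
          = ∑ i, ∑ j, hWpH.eigenvalues i ^ (1-s) * hKH.eigenvalues j ^ cc * ν i j := by
        rw [show mpow Wp (1-s) = cfc (fun y : ℝ => y ^ (1-s)) Wp from rfl,
          show mpow K cc = cfc (fun y : ℝ => y ^ cc) K from rfl, hνtr, Complex.ofReal_re]
      rw [e3]
      have hθ0 : (0:ℝ) ≤ 1 - s := by linarith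
      have hθ1 : (1:ℝ) - s ≤ 1 := by linarith
      have hpt : ∀ i j, hWpH.eigenvalues i ^ (1-s) * hKH.eigenvalues j ^ cc * ν i j
          = (ν i j * hWpH.eigenvalues i) ^ (1-s) *
            (ν i j * hKH.eigenvalues j ^ r) ^ (1-(1-s)) := by
        intro i j
        have h2 : (hKH.eigenvalues j ^ r) ^ (1-(1-s)) = hKH.eigenvalues j ^ cc := by
          rw [← Real.rpow_mul (le_of_lt (hγ j)),
            show r * (1-(1-s)) = cc by rw [hrdef, hcdef]; ring]
        rcases (hν0 i j).eq_or_lt with h0 | h0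
        · rcases eq_or_lt_of_le hθ0 with hh | hh
          · rw [← h0, ← hh]
            simp [Real.rpow_zero, Real.rpow_one]
          · rw [← h0, mul_zero, zero_mul, zero_mul,
              Real.zero_rpow (ne_of_gt hh), zero_mul]
        · rw [Real.mul_rpow (le_of_lt h0) (le_of_lt (hb i)),
            Real.mul_rpow (le_of_lt h0) (Real.rpow_nonneg (le_of_lt (hγ j)) _), h2]
          have hν1 : ν i j ^ (1-s) * ν i j ^ (1-(1-s)) = ν i j := by
            rw [← Real.rpow_add h0, show (1-s) + (1-(1-s)) = 1 by ring, Real.rpow_one]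
          calc hWpH.eigenvalues i ^ (1-s) * hKH.eigenvalues j ^ cc * ν i j
              = (ν i j ^ (1-s) * ν i j ^ (1-(1-s))) * hWpH.eigenvalues i ^ (1-s) *
                hKH.eigenvalues j ^ cc := by rw [hν1]; ring
            _ = _ := by ring
      have hH := sum_rpow_mul_rpow_le (Finset.univ ×ˢ Finset.univ) (1-s) hθ0 hθ1
        (fun q => ν q.1 q.2 * hWpH.eigenvalues q.1)
        (fun q => ν q.1 q.2 * hKH.eigenvalues q.2 ^ r)
        (fun q _ => mul_nonneg (hν0 q.1 q.2) (le_of_lt (hb q.1)))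
        (fun q _ => mul_nonneg (hν0 q.1 q.2) (Real.rpow_nonneg (le_of_lt (hγ q.2)) _))
      have hsu : ∑ q ∈ Finset.univ ×ˢ Finset.univ, ν q.1 q.2 * hWpH.eigenvalues q.1 = 1 := by
        rw [Finset.sum_product]
        have : ∀ i ∈ Finset.univ, ∑ j, ν i j * hWpH.eigenvalues i = hWpH.eigenvalues i := by
          intro i _
          rw [← Finset.sum_mul, hνrow i, one_mul]
        rw [Finset.sum_congr rfl this, hbsum]
      have hsv : ∑ q ∈ Finset.univ ×ˢ Finset.univ, ν q.1 q.2 * hKH.eigenvalues q.2 ^ r = F := by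
        rw [Finset.sum_product, Finset.sum_comm]
        have : ∀ j ∈ Finset.univ, ∑ i, ν i j * hKH.eigenvalues j ^ r
            = hKH.eigenvalues j ^ r := by
          intro j _
          rw [← Finset.sum_mul, hνcol j, one_mul]
        rw [Finset.sum_congr rfl this, hFdef]
      rw [hsu, hsv, Real.one_rpow, one_mul, show (1:ℝ)-(1-s) = s by ring] at hH
      refine le_trans (le_of_eq ?_) hH
      rw [Finset.sum_product]
      apply Finset.sum_congr rfl
      intro i _
      apply Finset.sum_congr rfl
      intro j _
      have := hpt i j
      rw [show (1:ℝ)-(1-s) = s by ring] at this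
      exact this
    have hGfinal : G (s/2) ≤ F ^ ((1+s)/2) := by
      refine le_trans hGB ?_
      have h1 : Real.sqrt (∑ x, p x * P x) ≤ Real.sqrt (F ^ s) := Real.sqrt_le_sqrt hsumP
      calc Real.sqrt (∑ x, p x * P x) * Real.sqrt (∑ x, p x * Q x)
          ≤ Real.sqrt (F ^ s) * Real.sqrt F := by
            rw [hsumQ]
            exact mul_le_mul_of_nonneg_right h1 (Real.sqrt_nonneg _)
        _ = F ^ (s/2) * F ^ ((1:ℝ)/2) := by
            rw [Real.sqrt_eq_rpow, Real.sqrt_eq_rpow, ← Real.rpow_mul (le_of_lt hFpos),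
              show s * (1/2) = s/2 by ring]
        _ = F ^ ((1+s)/2) := by
            rw [← Real.rpow_add hFpos, show s/2 + (1:ℝ)/2 = (1+s)/2 by ring]
    rw [hpsi (s/2), hphi]
    have hGs2 : 0 < G (s/2) := hGpos (s/2) (by linarith) (by linarith)
    calc Real.log (G (s/2)) ≤ Real.log (F ^ ((1+s)/2)) := Real.log_le_log hGs2 hGfinal
      _ = (1+s)/2 * Real.log F := Real.log_rpow hFpos _
  refine ⟨Real.log c₀, ?_, ?_, ?_⟩
  · intro s hs
    rw [hpsi s]
    exact Real.log_le_log hc₀pos (hGlb s hs.1 hs.2)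
  · intro s hs
    rcases hs.1.eq_or_lt with h0 | h0
    · rw [← h0]
      rw [show (0:ℝ)/(1+0) = 0 by norm_num, hphi0, hpsi0]
      norm_num
    · exact (hkey s h0 hs.2).1
  · intro s hs
    rcases hs.1.eq_or_lt with h0 | h0
    · rw [← h0]
      rw [show (0:ℝ)/2 = 0 by norm_num, show (0:ℝ)/(1+0) = 0 by norm_num, hpsi0, hphi0]
      norm_num
    · exact (hkey s h0 hs.2).2

end Main
end ExpAux

theorem exponent_comparison {X : Type*} [Fintype X] {d : ℕ}
    (W : X → Matrix (Fin d) (Fin d) ℂ) (p : X → ℝ) (R : ℝ)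
    (hW : ∀ x, (W x).PosSemidef) (hWtr : ∀ x, Matrix.trace (W x) = 1)
    (hp : ∀ x, 0 ≤ p x) (hp1 : ∑ x, p x = 1)
    (hWp : (∑ x, (p x : ℂ) • W x).PosDef) :
    (1/2) * sSup ((fun s => s * R - psiF W p s) '' Set.Icc (0:ℝ) 1)
        ≤ sSup ((fun s => s/2 * R - (1+s)/2 * phiF W p (s/(1+s))) '' Set.Icc (0:ℝ) 1) ∧
    sSup ((fun s => s/2 * R - (1+s)/2 * phiF W p (s/(1+s))) '' Set.Icc (0:ℝ) 1)
        ≤ sSup ((fun s => s * R - psiF W p s) '' Set.Icc (0:ℝ) 1) := by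
  obtain ⟨C, hC, hA, hB⟩ := ExpAux.main_core W p hW hWtr hp hp1 hWp
  have h01 : (0:ℝ) ∈ Set.Icc (0:ℝ) 1 := by constructor <;> norm_num
  have hne1 : ((fun s => s * R - psiF W p s) '' Set.Icc (0:ℝ) 1).Nonempty :=
    ⟨_, ⟨0, h01, rfl⟩⟩
  have hne2 : ((fun s => s/2 * R - (1+s)/2 * phiF W p (s/(1+s))) '' Set.Icc (0:ℝ) 1).Nonempty :=
    ⟨_, ⟨0, h01, rfl⟩⟩
  have hsR : ∀ s ∈ Set.Icc (0:ℝ) 1, s * R ≤ |R| := by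
    intro s hs
    calc s * R ≤ |s * R| := le_abs_self _
      _ = s * |R| := by rw [abs_mul, abs_of_nonneg hs.1]
      _ ≤ 1 * |R| := by
          apply mul_le_mul_of_nonneg_right hs.2 (abs_nonneg R)
      _ = |R| := one_mul _
  have hbd1 : BddAbove ((fun s => s * R - psiF W p s) '' Set.Icc (0:ℝ) 1) := by
    refine ⟨|R| - C, ?_⟩
    rintro y ⟨s, hs, rfl⟩
    have h1 := hsR s hs
    have h2 := hC s hs
    simp only
    linarith
  have hbd2 : BddAbove
      ((fun s => s/2 * R - (1+s)/2 * phiF W p (s/(1+s))) '' Set.Icc (0:ℝ) 1) := by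
    refine ⟨|R| - C, ?_⟩
    rintro y ⟨s, hs, rfl⟩
    have hhalf : s/2 ∈ Set.Icc (0:ℝ) 1 := ⟨by linarith [hs.1], by linarith [hs.2]⟩
    have h1 := hsR (s/2) hhalf
    have h2 := hC (s/2) hhalf
    have h3 := hB s hs
    simp only
    linarith
  constructor
  · have key : sSup ((fun s => s * R - psiF W p s) '' Set.Icc (0:ℝ) 1)
        ≤ 2 * sSup ((fun s => s/2 * R - (1+s)/2 * phiF W p (s/(1+s))) '' Set.Icc (0:ℝ) 1) := by
      apply csSup_le hne1
      rintro y ⟨s, hs, rfl⟩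
      have h2 : s * R - psiF W p s
          ≤ 2 * (s/2 * R - (1+s)/2 * phiF W p (s/(1+s))) := by
        have := hA s hs
        linarith
      have h3 : s/2 * R - (1+s)/2 * phiF W p (s/(1+s))
          ≤ sSup ((fun s => s/2 * R - (1+s)/2 * phiF W p (s/(1+s))) '' Set.Icc (0:ℝ) 1) :=
        le_csSup hbd2 ⟨s, hs, rfl⟩
      simp only at h2 ⊢
      linarith
    linarith
  · apply csSup_le hne2
    rintro y ⟨s, hs, rfl⟩
    have hhalf : s/2 ∈ Set.Icc (0:ℝ) 1 := ⟨by linarith [hs.1], by linarith [hs.2]⟩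
    have h1 : s/2 * R - (1+s)/2 * phiF W p (s/(1+s)) ≤ s/2 * R - psiF W p (s/2) := by
      have := hB s hs
      linarith
    have hmem : s/2 * R - psiF W p (s/2)
        ∈ (fun s => s * R - psiF W p s) '' Set.Icc (0:ℝ) 1 := ⟨s/2, hhalf, rfl⟩
    simp only at h1 ⊢
    exact le_trans h1 (le_csSup hbd1 hmem)
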